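/- Let n and k be integers with 1 ≤ k < n and k even, and let w : (0,∞) → ℝ be measurable satisfying ∫₀^∞ s^{n−k−1} |w(s)| ds < ∞, ∫₁^∞ s^{β+n−k−1} |w(s)| ds < ∞ for some β > k, and the cancellation conditions ∫₀^∞ s^{j+n−k−1} w(s) ds = 0 for j = 0, 2, 4, …, k. Define w̃(s) = s^{(n−k)/2 − 1} w(√s) and λ(s) = (1/(s Γ(k/2 + 1))) ∫₀^{s²} (s² − r)^{k/2} w̃(r) dr for s > 0. Then λ is integrable on (0,∞) and ∫₀^∞ λ(s) ds = (2(−1)^{1+k/2} / (k/2)!) ∫₀^∞ s^{n−1} w(s) log s ds. -/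

import Mathlib

open MeasureTheory Set

private lemma fub_pow (ψ : ℝ → ℝ) (hψ : Measurable ψ) (a : ℕ)
    (hint : IntegrableOn (fun t => t ^ (a+1) * |ψ t|) (Set.Ioi 0)) :
    IntegrableOn (fun s => s ^ a * ∫ t in Set.Ioi s, ψ t) (Set.Ioi 0) ∧
    ∫ s in Set.Ioi 0, s ^ a * ∫ t in Set.Ioi s, ψ t
      = ((a:ℝ)+1)⁻¹ * ∫ t in Set.Ioi 0, t ^ (a+1) * ψ t := by
  set B : Set (ℝ × ℝ) := {p | 0 < p.2 ∧ p.2 < p.1} with hBdef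
  have hB : MeasurableSet B :=
    (measurableSet_lt measurable_const measurable_snd).inter
      (measurableSet_lt measurable_snd measurable_fst)
  set F : ℝ × ℝ → ℝ := B.indicator (fun p => p.2 ^ a * ψ p.1) with hFdef
  have hFmeas : Measurable F :=
    ((measurable_snd.pow_const a).mul (hψ.comp measurable_fst)).indicator hB
  have hslice1 : ∀ t s : ℝ, F (t, s) = (Set.Ioo 0 t).indicator (fun s => s ^ a * ψ t) s := by
    intro t s
    by_cases h : 0 < s ∧ s < t
    · simp [F, B, Set.indicator_apply, Set.mem_Ioo, h]
    · simp [F, B, Set.indicator_apply, Set.mem_Ioo, h]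
  have hslice2 : ∀ s t : ℝ, 0 < s →
      F (t, s) = (Set.Ioi s).indicator (fun t => s ^ a * ψ t) t := by
    intro s t hs
    by_cases h : s < t
    · simp [F, B, Set.indicator_apply, h, hs]
    · simp [F, B, Set.indicator_apply, h, hs]
  have hzero : ∀ s t : ℝ, ¬ (0 < s) → F (t, s) = 0 := by
    intro s t hs; simp [F, B, Set.indicator_apply, hs]
  have hIoo : ∀ t : ℝ, 0 < t → ∫ s in Set.Ioo 0 t, s ^ a = t ^ (a+1) / (a+1) := by
    intro t ht
    rw [← integral_Ioc_eq_integral_Ioo, ← intervalIntegral.integral_of_le ht.le,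
      _root_.integral_pow]
    simp
  have habs : ∀ t : ℝ,
      (∫ s, ‖F (t, s)‖) = (Set.Ioi 0).indicator (fun t => t ^ (a+1) / (a+1) * |ψ t|) t := by
    intro t
    simp only [hslice1, norm_indicator_eq_indicator_norm]
    rw [integral_indicator measurableSet_Ioo]
    by_cases ht : 0 < t
    · rw [setIntegral_congr_fun measurableSet_Ioo
        (g := fun s : ℝ => s ^ a * |ψ t|) (fun s hs => by
          rw [Real.norm_eq_abs, abs_mul, abs_pow, abs_of_pos hs.1]),
        integral_mul_const, hIoo t ht, Set.indicator_of_mem (Set.mem_Ioi.2 ht)]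
    · rw [Set.indicator_of_notMem (by simpa using ht)]
      have : Set.Ioo (0:ℝ) t = ∅ := Set.Ioo_eq_empty ht
      simp [this]
  have hFint : Integrable F (volume.prod volume) := by
    rw [integrable_prod_iff hFmeas.aestronglyMeasurable]
    constructor
    · refine ae_of_all _ fun t => ?_
      simp only [hslice1]
      rw [integrable_indicator_iff measurableSet_Ioo]
      exact (((continuous_pow a).mul continuous_const).integrableOn_Icc).mono_set
        Set.Ioo_subset_Icc_self
    · rw [funext habs, integrable_indicator_iff measurableSet_Ioi]
      exact IntegrableOn.congr_fun (hint.const_mul (((a:ℝ)+1)⁻¹)) (fun t _ => by ring) measurableSet_Ioi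
  have h1 : ∀ s : ℝ, (∫ t, F (t, s)) = (Set.Ioi 0).indicator
      (fun s => s ^ a * ∫ t in Set.Ioi s, ψ t) s := by
    intro s
    by_cases hs : 0 < s
    · simp only [fun t => hslice2 s t hs]
      rw [integral_indicator measurableSet_Ioi, integral_const_mul,
        Set.indicator_of_mem (Set.mem_Ioi.2 hs)]
    · simp only [hzero s _ hs]
      rw [Set.indicator_of_notMem (by simpa using hs)]
      simp
  have h2 : ∀ t : ℝ, (∫ s, F (t, s)) = (Set.Ioi 0).indicator
      (fun t => t ^ (a+1) / (a+1) * ψ t) t := by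
    intro t
    simp only [hslice1]
    rw [integral_indicator measurableSet_Ioo]
    by_cases ht : 0 < t
    · rw [integral_mul_const, hIoo t ht, Set.indicator_of_mem (Set.mem_Ioi.2 ht)]
    · rw [Set.indicator_of_notMem (by simpa using ht)]
      have : Set.Ioo (0:ℝ) t = ∅ := Set.Ioo_eq_empty ht
      simp [this]
  have hint1 : IntegrableOn (fun s => s ^ a * ∫ t in Set.Ioi s, ψ t) (Set.Ioi 0) := by
    have := hFint.integral_prod_right
    simp only [h1] at this
    exact (integrable_indicator_iff measurableSet_Ioi).1 this
  refine ⟨hint1, ?_⟩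
  calc ∫ s in Set.Ioi 0, s ^ a * ∫ t in Set.Ioi s, ψ t
      = ∫ s, (Set.Ioi 0).indicator (fun s => s ^ a * ∫ t in Set.Ioi s, ψ t) s :=
        (integral_indicator measurableSet_Ioi).symm
    _ = ∫ s, ∫ t, F (t, s) := by simp only [h1]
    _ = ∫ t, ∫ s, F (t, s) := (integral_integral_swap (by exact hFint)).symm
    _ = ∫ t, (Set.Ioi 0).indicator (fun t => t ^ (a+1) / (a+1) * ψ t) t := by simp only [h2]
    _ = ∫ t in Set.Ioi 0, t ^ (a+1) / (a+1) * ψ t := integral_indicator measurableSet_Ioi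
    _ = ((a:ℝ)+1)⁻¹ * ∫ t in Set.Ioi 0, t ^ (a+1) * ψ t := by
        rw [← integral_const_mul]
        exact setIntegral_congr_fun measurableSet_Ioi (fun t ht => by ring)

private lemma integral_split (ψ : ℝ → ℝ) (hint : IntegrableOn ψ (Set.Ioi 0)) {s : ℝ}
    (hs : 0 < s) :
    ∫ t in Set.Ioi 0, ψ t = (∫ t in Set.Ioo 0 s, ψ t) + ∫ t in Set.Ioi s, ψ t := by
  have hu : Set.Ioo 0 s ∪ Set.Ici s = Set.Ioi 0 := Set.Ioo_union_Ici_eq_Ioi hs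
  rw [← hu, setIntegral_union ((Set.Iio_disjoint_Ici le_rfl).mono_left Set.Ioo_subset_Iio_self) measurableSet_Ici
    (hint.mono_set (by rw [← hu]; exact Set.subset_union_left))
    (hint.mono_set (by rw [← hu]; exact Set.subset_union_right)),
    integral_Ici_eq_integral_Ioi]

private lemma fub_log_A (ψ : ℝ → ℝ) (hψ : Measurable ψ)
    (hint : IntegrableOn ψ (Set.Ioi 0))
    (hlog : IntegrableOn (fun t => |ψ t| * |Real.log t|) (Set.Ioi 0)) :
    IntegrableOn (fun s => s⁻¹ * ∫ t in Set.Ioi s, ψ t) (Set.Ici 1) ∧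
    ∫ s in Set.Ici 1, s⁻¹ * ∫ t in Set.Ioi s, ψ t = ∫ t in Set.Ici 1, Real.log t * ψ t := by
  set B : Set (ℝ × ℝ) := {p | 1 ≤ p.2 ∧ p.2 < p.1} with hBdef
  have hB : MeasurableSet B :=
    (measurableSet_le measurable_const measurable_snd).inter
      (measurableSet_lt measurable_snd measurable_fst)
  set F : ℝ × ℝ → ℝ := B.indicator (fun p => (p.2)⁻¹ * ψ p.1) with hFdef
  have hFmeas : Measurable F :=
    (measurable_snd.inv.mul (hψ.comp measurable_fst)).indicator hB
  have hslice1 : ∀ t s : ℝ, F (t, s) = (Set.Ico 1 t).indicator (fun s => s⁻¹ * ψ t) s := by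
    intro t s
    by_cases h : 1 ≤ s ∧ s < t
    · simp [F, B, Set.indicator_apply, Set.mem_Ico, h]
    · simp [F, B, Set.indicator_apply, Set.mem_Ico, h]
  have hslice2 : ∀ s t : ℝ, 1 ≤ s → F (t, s) = (Set.Ioi s).indicator (fun t => s⁻¹ * ψ t) t := by
    intro s t hs
    by_cases h : s < t
    · simp [F, B, Set.indicator_apply, h, hs]
    · simp [F, B, Set.indicator_apply, h, hs]
  have hzero : ∀ s t : ℝ, ¬ (1 ≤ s) → F (t, s) = 0 := by
    intro s t hs; simp [F, B, Set.indicator_apply, hs]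
  have hIco : ∀ t : ℝ, 1 ≤ t → ∫ s in Set.Ico 1 t, s⁻¹ = Real.log t := by
    intro t ht
    rw [integral_Ico_eq_integral_Ioo, ← integral_Ioc_eq_integral_Ioo,
      ← intervalIntegral.integral_of_le ht, integral_inv_of_pos zero_lt_one
      (lt_of_lt_of_le zero_lt_one ht), div_one]
  have hIcoEmpty : ∀ t : ℝ, ¬ (1 ≤ t) → Set.Ico (1:ℝ) t = ∅ := by
    intro t ht; exact Set.Ico_eq_empty (fun h => ht h.le)
  have habs : ∀ t : ℝ,
      (∫ s, ‖F (t, s)‖) = (Set.Ici 1).indicator (fun t => Real.log t * |ψ t|) t := by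
    intro t
    simp only [hslice1, norm_indicator_eq_indicator_norm]
    rw [integral_indicator measurableSet_Ico]
    by_cases ht : 1 ≤ t
    · rw [setIntegral_congr_fun measurableSet_Ico
        (g := fun s : ℝ => s⁻¹ * |ψ t|) (fun s hs => by
          rw [Real.norm_eq_abs, abs_mul, abs_inv, abs_of_pos (lt_of_lt_of_le zero_lt_one hs.1)]),
        integral_mul_const, hIco t ht, Set.indicator_of_mem (Set.mem_Ici.2 ht)]
    · rw [Set.indicator_of_notMem (by simpa using ht), hIcoEmpty t ht]
      simp
  have hFint : Integrable F (volume.prod volume) := by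
    rw [integrable_prod_iff hFmeas.aestronglyMeasurable]
    constructor
    · refine ae_of_all _ fun t => ?_
      simp only [hslice1]
      rw [integrable_indicator_iff measurableSet_Ico]
      by_cases ht : 1 ≤ t
      · refine (((ContinuousOn.inv₀ continuousOn_id (fun x hx => ?_)).mul
          continuousOn_const).integrableOn_Icc).mono_set Set.Ico_subset_Icc_self
        exact ne_of_gt (lt_of_lt_of_le zero_lt_one hx.1)
      · rw [hIcoEmpty t ht]; simp [integrableOn_empty]
    · rw [funext habs, integrable_indicator_iff measurableSet_Ici]
      refine IntegrableOn.congr_fun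
        ((hlog.mono_set (fun x hx => Set.mem_Ioi.2 (lt_of_lt_of_le zero_lt_one (Set.mem_Ici.1 hx)))))
        (fun t ht => ?_) measurableSet_Ici
      rw [abs_of_nonneg (Real.log_nonneg ht), mul_comm]
  have h1 : ∀ s : ℝ, (∫ t, F (t, s)) = (Set.Ici 1).indicator
      (fun s => s⁻¹ * ∫ t in Set.Ioi s, ψ t) s := by
    intro s
    by_cases hs : 1 ≤ s
    · simp only [fun t => hslice2 s t hs]
      rw [integral_indicator measurableSet_Ioi, integral_const_mul,
        Set.indicator_of_mem (Set.mem_Ici.2 hs)]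
    · simp only [hzero s _ hs]
      rw [Set.indicator_of_notMem (by simpa using hs)]
      simp
  have h2 : ∀ t : ℝ, (∫ s, F (t, s)) = (Set.Ici 1).indicator
      (fun t => Real.log t * ψ t) t := by
    intro t
    simp only [hslice1]
    rw [integral_indicator measurableSet_Ico]
    by_cases ht : 1 ≤ t
    · rw [integral_mul_const, hIco t ht, Set.indicator_of_mem (Set.mem_Ici.2 ht)]
    · rw [Set.indicator_of_notMem (by simpa using ht), hIcoEmpty t ht]
      simp
  have hint1 : IntegrableOn (fun s => s⁻¹ * ∫ t in Set.Ioi s, ψ t) (Set.Ici 1) := by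
    have := hFint.integral_prod_right
    simp only [h1] at this
    exact (integrable_indicator_iff measurableSet_Ici).1 this
  refine ⟨hint1, ?_⟩
  calc ∫ s in Set.Ici 1, s⁻¹ * ∫ t in Set.Ioi s, ψ t
      = ∫ s, (Set.Ici 1).indicator (fun s => s⁻¹ * ∫ t in Set.Ioi s, ψ t) s :=
        (integral_indicator measurableSet_Ici).symm
    _ = ∫ s, ∫ t, F (t, s) := by simp only [h1]
    _ = ∫ t, ∫ s, F (t, s) := (integral_integral_swap (by exact hFint)).symm
    _ = ∫ t, (Set.Ici 1).indicator (fun t => Real.log t * ψ t) t := by simp only [h2]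
    _ = ∫ t in Set.Ici 1, Real.log t * ψ t := integral_indicator measurableSet_Ici

private lemma fub_log_B (ψ : ℝ → ℝ) (hψ : Measurable ψ)
    (hint : IntegrableOn ψ (Set.Ioi 0))
    (hlog : IntegrableOn (fun t => |ψ t| * |Real.log t|) (Set.Ioi 0)) :
    IntegrableOn (fun s => s⁻¹ * ∫ t in Set.Ioo 0 s, ψ t) (Set.Ioo 0 1) ∧
    ∫ s in Set.Ioo 0 1, s⁻¹ * ∫ t in Set.Ioo 0 s, ψ t
      = ∫ t in Set.Ioo 0 1, (-Real.log t) * ψ t := by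
  set B : Set (ℝ × ℝ) := {p | 0 < p.1 ∧ p.1 < p.2 ∧ p.2 < 1} with hBdef
  have hB : MeasurableSet B :=
    (measurableSet_lt measurable_const measurable_fst).inter
      ((measurableSet_lt measurable_fst measurable_snd).inter
        (measurableSet_lt measurable_snd measurable_const))
  set F : ℝ × ℝ → ℝ := B.indicator (fun p => (p.2)⁻¹ * ψ p.1) with hFdef
  have hFmeas : Measurable F :=
    (measurable_snd.inv.mul (hψ.comp measurable_fst)).indicator hB
  have hslice1 : ∀ t s : ℝ, 0 < t →
      F (t, s) = (Set.Ioo t 1).indicator (fun s => s⁻¹ * ψ t) s := by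
    intro t s ht
    by_cases h : t < s ∧ s < 1
    · simp [F, B, Set.indicator_apply, Set.mem_Ioo, h, ht]
    · simp [F, B, Set.indicator_apply, Set.mem_Ioo, h, ht]
  have hzero1 : ∀ t s : ℝ, ¬ (0 < t) → F (t, s) = 0 := by
    intro t s ht; simp [F, B, Set.indicator_apply, ht]
  have hslice2 : ∀ s t : ℝ, s < 1 →
      F (t, s) = (Set.Ioo 0 s).indicator (fun t => s⁻¹ * ψ t) t := by
    intro s t hs
    by_cases h : 0 < t ∧ t < s
    · simp [F, B, Set.indicator_apply, Set.mem_Ioo, h, hs]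
    · simp [F, B, Set.indicator_apply, Set.mem_Ioo, h, hs]
  have hzero2 : ∀ s t : ℝ, ¬ (s < 1) → F (t, s) = 0 := by
    intro s t hs; simp [F, B, Set.indicator_apply, hs]
  have hIoo : ∀ t : ℝ, 0 < t → t < 1 → ∫ s in Set.Ioo t 1, s⁻¹ = -Real.log t := by
    intro t ht ht1
    rw [← integral_Ioc_eq_integral_Ioo, ← intervalIntegral.integral_of_le ht1.le,
      integral_inv_of_pos ht zero_lt_one, one_div, Real.log_inv]
  have hIooEmpty : ∀ t : ℝ, ¬ (t < 1) → Set.Ioo t (1:ℝ) = ∅ := fun t ht => Set.Ioo_eq_empty ht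
  have habs : ∀ t : ℝ,
      (∫ s, ‖F (t, s)‖) = (Set.Ioo 0 1).indicator (fun t => -Real.log t * |ψ t|) t := by
    intro t
    by_cases ht : 0 < t
    · simp only [fun s => hslice1 t s ht, norm_indicator_eq_indicator_norm]
      rw [integral_indicator measurableSet_Ioo]
      by_cases ht1 : t < 1
      · rw [setIntegral_congr_fun measurableSet_Ioo
          (g := fun s : ℝ => s⁻¹ * |ψ t|) (fun s hs => by
            rw [Real.norm_eq_abs, abs_mul, abs_inv, abs_of_pos (lt_trans ht hs.1)]),
          integral_mul_const, hIoo t ht ht1,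
          Set.indicator_of_mem (Set.mem_Ioo.2 ⟨ht, ht1⟩)]
      · rw [Set.indicator_of_notMem (fun hm => ht1 hm.2), hIooEmpty t ht1]
        simp
    · simp only [hzero1 t _ ht]
      rw [Set.indicator_of_notMem (fun hm => ht hm.1)]
      simp
  have hFint : Integrable F (volume.prod volume) := by
    rw [integrable_prod_iff hFmeas.aestronglyMeasurable]
    constructor
    · refine ae_of_all _ fun t => ?_
      by_cases ht : 0 < t
      · simp only [fun s => hslice1 t s ht]
        rw [integrable_indicator_iff measurableSet_Ioo]
        by_cases ht1 : t < 1
        · refine (((ContinuousOn.inv₀ continuousOn_id (fun x hx => ?_)).mul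
            continuousOn_const).integrableOn_Icc).mono_set Set.Ioo_subset_Icc_self
          exact ne_of_gt (lt_of_lt_of_le ht hx.1)
        · rw [hIooEmpty t ht1]; simp [integrableOn_empty]
      · simp only [hzero1 t _ ht]
        exact integrable_zero _ _ _
    · rw [funext habs, integrable_indicator_iff measurableSet_Ioo]
      refine IntegrableOn.congr_fun (hlog.mono_set (fun x hx => hx.1))
        (fun t ht => ?_) measurableSet_Ioo
      rw [abs_of_nonpos (Real.log_nonpos ht.1.le ht.2.le), mul_comm]
  have h1 : ∀ s : ℝ, (∫ t, F (t, s)) = (Set.Ioo 0 1).indicator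
      (fun s => s⁻¹ * ∫ t in Set.Ioo 0 s, ψ t) s := by
    intro s
    by_cases hs1 : s < 1
    · simp only [fun t => hslice2 s t hs1]
      rw [integral_indicator measurableSet_Ioo, integral_const_mul]
      by_cases hs0 : 0 < s
      · rw [Set.indicator_of_mem (Set.mem_Ioo.2 ⟨hs0, hs1⟩)]
      · rw [Set.indicator_of_notMem (fun hm => hs0 hm.1)]
        have : Set.Ioo (0:ℝ) s = ∅ := Set.Ioo_eq_empty hs0
        simp [this]
    · simp only [hzero2 s _ hs1]
      rw [Set.indicator_of_notMem (fun hm => hs1 hm.2)]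
      simp
  have h2 : ∀ t : ℝ, (∫ s, F (t, s)) = (Set.Ioo 0 1).indicator
      (fun t => -Real.log t * ψ t) t := by
    intro t
    by_cases ht : 0 < t
    · simp only [fun s => hslice1 t s ht]
      rw [integral_indicator measurableSet_Ioo]
      by_cases ht1 : t < 1
      · rw [integral_mul_const, hIoo t ht ht1, Set.indicator_of_mem (Set.mem_Ioo.2 ⟨ht, ht1⟩)]
      · rw [Set.indicator_of_notMem (fun hm => ht1 hm.2), hIooEmpty t ht1]
        simp
    · simp only [hzero1 t _ ht]
      rw [Set.indicator_of_notMem (fun hm => ht hm.1)]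
      simp
  have hint1 : IntegrableOn (fun s => s⁻¹ * ∫ t in Set.Ioo 0 s, ψ t) (Set.Ioo 0 1) := by
    have := hFint.integral_prod_right
    simp only [h1] at this
    exact (integrable_indicator_iff measurableSet_Ioo).1 this
  refine ⟨hint1, ?_⟩
  calc ∫ s in Set.Ioo 0 1, s⁻¹ * ∫ t in Set.Ioo 0 s, ψ t
      = ∫ s, (Set.Ioo 0 1).indicator (fun s => s⁻¹ * ∫ t in Set.Ioo 0 s, ψ t) s :=
        (integral_indicator measurableSet_Ioo).symm
    _ = ∫ s, ∫ t, F (t, s) := by simp only [h1]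
    _ = ∫ t, ∫ s, F (t, s) := (integral_integral_swap (by exact hFint)).symm
    _ = ∫ t, (Set.Ioo 0 1).indicator (fun t => -Real.log t * ψ t) t := by simp only [h2]
    _ = ∫ t in Set.Ioo 0 1, -Real.log t * ψ t := integral_indicator measurableSet_Ioo

private lemma fub_log (ψ : ℝ → ℝ) (hψ : Measurable ψ)
    (hint : IntegrableOn ψ (Set.Ioi 0))
    (hlog : IntegrableOn (fun t => |ψ t| * |Real.log t|) (Set.Ioi 0))
    (hzero : ∫ t in Set.Ioi 0, ψ t = 0) :
    IntegrableOn (fun s => s⁻¹ * ∫ t in Set.Ioi s, ψ t) (Set.Ioi 0) ∧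
    ∫ s in Set.Ioi 0, s⁻¹ * ∫ t in Set.Ioi s, ψ t
      = ∫ t in Set.Ioi 0, Real.log t * ψ t := by
  obtain ⟨hA1, hA2⟩ := fub_log_A ψ hψ hint hlog
  obtain ⟨hB1, hB2⟩ := fub_log_B ψ hψ hint hlog
  have hloggint : IntegrableOn (fun t => Real.log t * ψ t) (Set.Ioi 0) := by
    refine Integrable.mono hlog ((Real.measurable_log.mul hψ).aestronglyMeasurable) ?_
    refine ae_of_all _ fun t => ?_
    simp [Real.norm_eq_abs, abs_mul, mul_comm]
  have hkey : ∀ s : ℝ, s ∈ Set.Ioo (0:ℝ) 1 →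
      -(s⁻¹ * ∫ t in Set.Ioo 0 s, ψ t) = s⁻¹ * ∫ t in Set.Ioi s, ψ t := by
    intro s hs
    have := integral_split ψ hint hs.1
    rw [hzero] at this
    have h' : ∫ t in Set.Ioi s, ψ t = -∫ t in Set.Ioo 0 s, ψ t := by linarith
    rw [h']; ring
  have hintB' : IntegrableOn (fun s => s⁻¹ * ∫ t in Set.Ioi s, ψ t) (Set.Ioo 0 1) :=
    IntegrableOn.congr_fun hB1.neg hkey measurableSet_Ioo
  have hu : Set.Ioo (0:ℝ) 1 ∪ Set.Ici 1 = Set.Ioi 0 := Set.Ioo_union_Ici_eq_Ioi zero_lt_one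
  have hdisj : Disjoint (Set.Ioo (0:ℝ) 1) (Set.Ici 1) :=
    (Set.Iio_disjoint_Ici le_rfl).mono_left Set.Ioo_subset_Iio_self
  constructor
  · rw [← hu]; exact hintB'.union hA1
  · rw [← hu, setIntegral_union hdisj measurableSet_Ici hintB' hA1,
      setIntegral_union hdisj measurableSet_Ici
        (hloggint.mono_set (by rw [← hu]; exact Set.subset_union_left))
        (hloggint.mono_set (by rw [← hu]; exact Set.subset_union_right))]
    congr 1
    rw [← setIntegral_congr_fun measurableSet_Ioo hkey, integral_neg, hB2, ← integral_neg]
    exact setIntegral_congr_fun measurableSet_Ioo (fun t ht => by ring)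

private lemma master_int (n k : ℕ) (w : ℝ → ℝ) (hw : Measurable w)
    (hI0 : IntegrableOn (fun s => s ^ ((n : ℝ) - k - 1) * |w s|) (Set.Ioi 0))
    (β : ℝ) (hIβ : IntegrableOn (fun s => s ^ (β + (n : ℝ) - k - 1) * |w s|) (Set.Ioi 1))
    (c : ℝ) (hc0 : 0 ≤ c) (hcβ : c ≤ β) :
    IntegrableOn (fun t => t ^ (c + (n : ℝ) - k - 1) * |w t|) (Set.Ioi 0) := by
  have hmeas : Measurable (fun t : ℝ => t ^ (c + (n : ℝ) - k - 1) * |w t|) := by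
    measurability
  have hu : Set.Ioc (0:ℝ) 1 ∪ Set.Ioi 1 = Set.Ioi 0 := Set.Ioc_union_Ioi_eq_Ioi zero_le_one
  rw [← hu]
  apply IntegrableOn.union
  · refine Integrable.mono (hI0.mono_set (fun x hx => hx.1)) hmeas.aestronglyMeasurable ?_
    filter_upwards [ae_restrict_mem measurableSet_Ioc] with t ht
    have h0 : (0:ℝ) ≤ t ^ (c + (n : ℝ) - k - 1) * |w t| :=
      mul_nonneg (Real.rpow_nonneg ht.1.le _) (abs_nonneg _)
    have h0' : (0:ℝ) ≤ t ^ ((n : ℝ) - k - 1) * |w t| :=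
      mul_nonneg (Real.rpow_nonneg ht.1.le _) (abs_nonneg _)
    rw [Real.norm_of_nonneg h0, Real.norm_of_nonneg h0']
    have he : c + (n : ℝ) - k - 1 = c + ((n:ℝ) - k - 1) := by ring
    have h1 : t ^ c ≤ 1 := Real.rpow_le_one ht.1.le ht.2 hc0
    calc t ^ (c + (n : ℝ) - k - 1) * |w t|
        = t ^ c * (t ^ ((n:ℝ) - k - 1) * |w t|) := by
          rw [he, Real.rpow_add ht.1]; ring
      _ ≤ 1 * (t ^ ((n:ℝ) - k - 1) * |w t|) := mul_le_mul_of_nonneg_right h1 h0'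
      _ = t ^ ((n:ℝ) - k - 1) * |w t| := one_mul _
  · refine Integrable.mono hIβ hmeas.aestronglyMeasurable ?_
    filter_upwards [ae_restrict_mem measurableSet_Ioi] with t ht
    have ht0 : (0:ℝ) < t := lt_trans zero_lt_one ht
    have h0 : (0:ℝ) ≤ t ^ (c + (n : ℝ) - k - 1) * |w t| :=
      mul_nonneg (Real.rpow_nonneg ht0.le _) (abs_nonneg _)
    have h0' : (0:ℝ) ≤ t ^ (β + (n : ℝ) - k - 1) * |w t| :=
      mul_nonneg (Real.rpow_nonneg ht0.le _) (abs_nonneg _)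
    rw [Real.norm_of_nonneg h0, Real.norm_of_nonneg h0']
    exact mul_le_mul_of_nonneg_right
      (Real.rpow_le_rpow_of_exponent_le ht.le (by linarith)) (abs_nonneg _)

private lemma log_int (n k : ℕ) (hk : 1 ≤ k) (w : ℝ → ℝ) (hw : Measurable w)
    (hI0 : IntegrableOn (fun s => s ^ ((n : ℝ) - k - 1) * |w s|) (Set.Ioi 0))
    (β : ℝ) (hβ : (k:ℝ) < β)
    (hIβ : IntegrableOn (fun s => s ^ (β + (n : ℝ) - k - 1) * |w s|) (Set.Ioi 1)) :
    IntegrableOn (fun t => t ^ ((n:ℝ) - 1) * |w t| * |Real.log t|) (Set.Ioi 0) := by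
  have hmeas : Measurable (fun t : ℝ => t ^ ((n:ℝ) - 1) * |w t| * |Real.log t|) := by
    measurability
  have hu : Set.Ioc (0:ℝ) 1 ∪ Set.Ioi 1 = Set.Ioi 0 := Set.Ioc_union_Ioi_eq_Ioi zero_le_one
  rw [← hu]
  apply IntegrableOn.union
  · refine Integrable.mono (hI0.mono_set (fun x hx => hx.1)) hmeas.aestronglyMeasurable ?_
    filter_upwards [ae_restrict_mem measurableSet_Ioc] with t ht
    have h0 : (0:ℝ) ≤ t ^ ((n:ℝ) - 1) * |w t| * |Real.log t| :=
      mul_nonneg (mul_nonneg (Real.rpow_nonneg ht.1.le _) (abs_nonneg _)) (abs_nonneg _)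
    have h0' : (0:ℝ) ≤ t ^ ((n : ℝ) - k - 1) * |w t| :=
      mul_nonneg (Real.rpow_nonneg ht.1.le _) (abs_nonneg _)
    rw [Real.norm_of_nonneg h0, Real.norm_of_nonneg h0']
    have hlog : |Real.log t| ≤ t ^ (-1 : ℝ) := by
      rw [abs_of_nonpos (Real.log_nonpos ht.1.le ht.2)]
      have h2 : Real.log (t⁻¹) ≤ t⁻¹ - 1 := Real.log_le_sub_one_of_pos (inv_pos.2 ht.1)
      rw [Real.log_inv] at h2
      rw [Real.rpow_neg_one]
      linarith [inv_pos.2 ht.1]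
    have hkk : t ^ (k:ℝ) * |Real.log t| ≤ 1 := by
      calc t ^ (k:ℝ) * |Real.log t| ≤ t ^ (k:ℝ) * t ^ (-1:ℝ) :=
            mul_le_mul_of_nonneg_left hlog (Real.rpow_nonneg ht.1.le _)
        _ = t ^ ((k:ℝ) - 1) := by
            rw [← Real.rpow_add ht.1, sub_eq_add_neg]
        _ ≤ 1 := Real.rpow_le_one ht.1.le ht.2 (by
            have : (1:ℝ) ≤ (k:ℝ) := by exact_mod_cast hk
            linarith)
    calc t ^ ((n:ℝ)-1) * |w t| * |Real.log t|
        = (t ^ ((n:ℝ)-k-1) * |w t|) * (t ^ (k:ℝ) * |Real.log t|) := by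
          have he : (n:ℝ) - 1 = ((n:ℝ) - k - 1) + k := by ring
          rw [he, Real.rpow_add ht.1]; ring
      _ ≤ (t ^ ((n:ℝ)-k-1) * |w t|) * 1 := mul_le_mul_of_nonneg_left hkk h0'
      _ = t ^ ((n:ℝ)-k-1) * |w t| := mul_one _
  · refine Integrable.mono (hIβ.const_mul (β - (k:ℝ))⁻¹) hmeas.aestronglyMeasurable ?_
    filter_upwards [ae_restrict_mem measurableSet_Ioi] with t ht
    have ht0 : (0:ℝ) < t := lt_trans zero_lt_one ht
    have hβk : (0:ℝ) < β - k := by linarith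
    have h0 : (0:ℝ) ≤ t ^ ((n:ℝ) - 1) * |w t| * |Real.log t| :=
      mul_nonneg (mul_nonneg (Real.rpow_nonneg ht0.le _) (abs_nonneg _)) (abs_nonneg _)
    have h0' : (0:ℝ) ≤ (β - (k:ℝ))⁻¹ * (t ^ (β + (n : ℝ) - k - 1) * |w t|) :=
      mul_nonneg (by positivity) (mul_nonneg (Real.rpow_nonneg ht0.le _) (abs_nonneg _))
    rw [Real.norm_of_nonneg h0, Real.norm_of_nonneg h0']
    have hlog : |Real.log t| ≤ (β - (k:ℝ))⁻¹ * t ^ (β - (k:ℝ)) := by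
      rw [abs_of_nonneg (Real.log_nonneg ht.le)]
      have h2 : Real.log (t ^ (β - (k:ℝ))) ≤ t ^ (β - (k:ℝ)) - 1 :=
        Real.log_le_sub_one_of_pos (Real.rpow_pos_of_pos ht0 _)
      rw [Real.log_rpow ht0] at h2
      have h3 : (β - (k:ℝ)) * Real.log t ≤ t ^ (β - (k:ℝ)) := by
        linarith [Real.rpow_pos_of_pos ht0 (β - (k:ℝ))]
      calc Real.log t = (β - (k:ℝ))⁻¹ * ((β - (k:ℝ)) * Real.log t) := by field_simp
        _ ≤ (β - (k:ℝ))⁻¹ * t ^ (β - (k:ℝ)) :=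
            mul_le_mul_of_nonneg_left h3 (by positivity)
    calc t ^ ((n:ℝ)-1) * |w t| * |Real.log t|
        ≤ t ^ ((n:ℝ)-1) * |w t| * ((β - (k:ℝ))⁻¹ * t ^ (β - (k:ℝ))) :=
          mul_le_mul_of_nonneg_left hlog
            (mul_nonneg (Real.rpow_nonneg ht0.le _) (abs_nonneg _))
      _ = (β - (k:ℝ))⁻¹ * (t ^ (β + (n:ℝ) - k - 1) * |w t|) := by
          have he : (β + (n:ℝ) - k - 1) = ((n:ℝ) - 1) + (β - (k:ℝ)) := by ring
          rw [he, Real.rpow_add ht0]; ring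


/-- Reconstruction constant, even case: for `k` even and an admissible `w`,
`∫₀^∞ λ(s) ds = (2(-1)^{1+k/2}/(k/2)!) ∫₀^∞ s^{n-1} w(s) log s ds`, where
`λ(s) = (1/(s Γ(k/2+1))) ∫₀^{s²} (s²-r)^{k/2} w̃(r) dr` and
`w̃(s) = s^{(n-k)/2-1} w(√s)`. -/
theorem stmt_16 (n k : ℕ) (hk : 1 ≤ k) (hkn : k < n) (heven : Even k)
    (w : ℝ → ℝ) (hw : Measurable w)
    (hI0 : IntegrableOn (fun s => s ^ ((n : ℝ) - k - 1) * |w s|) (Set.Ioi 0))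
    (β : ℝ) (hβ : (k : ℝ) < β)
    (hIβ : IntegrableOn (fun s => s ^ (β + (n : ℝ) - k - 1) * |w s|) (Set.Ioi 1))
    (hmom : ∀ j : ℕ, 2 * j ≤ k →
      ∫ s in Set.Ioi 0, s ^ (2 * (j : ℝ) + n - k - 1) * w s = 0)
    (wt lam : ℝ → ℝ)
    (hwt : ∀ s : ℝ, wt s = s ^ (((n : ℝ) - k) / 2 - 1) * w (Real.sqrt s))
    (hlam : ∀ s : ℝ, 0 < s → lam s =
      1 / (s * Real.Gamma ((k : ℝ) / 2 + 1)) *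
        ∫ r in Set.Ioo 0 (s ^ 2), (s ^ 2 - r) ^ ((k : ℝ) / 2) * wt r) :
    IntegrableOn lam (Set.Ioi 0) ∧
    ∫ s in Set.Ioi 0, lam s
      = (2 * (-1 : ℝ) ^ (1 + k / 2) / (Nat.factorial (k / 2) : ℝ)) *
          ∫ s in Set.Ioi 0, s ^ ((n : ℝ) - 1) * w s * Real.log s := by
  classical
  obtain ⟨m, hmm⟩ := heven
  have hm2 : k = 2 * m := by omega
  have hm1 : 1 ≤ m := by omega
  have hkd2 : k / 2 = m := by omega
  have hfac : ((Nat.factorial m : ℝ)) ≠ 0 := by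
    exact_mod_cast Nat.factorial_ne_zero m
  set ψ : ℕ → ℝ → ℝ := fun i t => t ^ (2 * (i:ℝ) + (n:ℝ) - (k:ℝ) - 1) * w t with hψdef
  have hψmeas : ∀ i, Measurable (ψ i) := fun i => by
    simp only [hψdef]; measurability
  -- integrability of ψ i for 2 i ≤ k
  have hψint : ∀ i, 2*i ≤ k → IntegrableOn (ψ i) (Set.Ioi 0) := by
    intro i hi
    have hmast := master_int n k w hw hI0 β hIβ (2*(i:ℝ))
      (by positivity) (by
        have : (2*(i:ℝ)) ≤ (k:ℝ) := by exact_mod_cast hi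
        linarith)
    refine Integrable.mono hmast (hψmeas i).aestronglyMeasurable ?_
    filter_upwards [ae_restrict_mem measurableSet_Ioi] with t ht
    simp only [hψdef]
    rw [Real.norm_eq_abs, abs_mul, abs_of_nonneg (Real.rpow_nonneg (le_of_lt ht) _),
      Real.norm_of_nonneg (mul_nonneg (Real.rpow_nonneg (le_of_lt ht) _) (abs_nonneg _))]
  have hψzero : ∀ i, 2*i ≤ k → ∫ t in Set.Ioi 0, ψ i t = 0 := fun i hi => hmom i hi
  -- integrability with weight t^{n-1}
  have hn1 : IntegrableOn (fun t => t ^ ((n:ℝ) - 1) * |w t|) (Set.Ioi 0) := by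
    have h := master_int n k w hw hI0 β hIβ (k:ℝ) (by positivity) (le_of_lt hβ)
    have he : (fun t : ℝ => t ^ ((k:ℝ) + (n:ℝ) - k - 1) * |w t|)
        = fun t : ℝ => t ^ ((n:ℝ) - 1) * |w t| := by
      funext t; congr 1; congr 1; ring
    rwa [he] at h
  have hlog := log_int n k hk w hw hI0 β hβ hIβ
  -- cast identity for indices j ≤ m
  have hcast : ∀ j : ℕ, j ≤ m → ((m - j : ℕ) : ℝ) = (m:ℝ) - j := by
    intro j hj; exact Nat.cast_sub hj
  have hkR : (k:ℝ) = 2 * m := by exact_mod_cast hm2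
  -- exponent identity
  have hexp : ∀ j : ℕ, j ≤ m → ∀ t : ℝ, 0 < t →
      (t:ℝ) ^ (2*j) * ψ (m-j) t = ψ m t := by
    intro j hj t ht
    simp only [hψdef]
    rw [← Real.rpow_natCast t (2*j), ← mul_assoc, ← Real.rpow_add ht]
    congr 2
    push_cast [Nat.cast_sub hj]
    ring
  have hexpabs : ∀ j : ℕ, j ≤ m → ∀ t : ℝ, 0 < t →
      (t:ℝ) ^ (2*j) * |ψ (m-j) t| = t ^ ((n:ℝ) - 1) * |w t| := by
    intro j hj t ht
    simp only [hψdef]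
    rw [abs_mul, abs_of_nonneg (Real.rpow_nonneg ht.le _), ← Real.rpow_natCast t (2*j),
      ← mul_assoc, ← Real.rpow_add ht]
    congr 2
    · push_cast [Nat.cast_sub hj]
      rw [hkR]; ring
  have hψmabs : ∀ t : ℝ, 0 < t → |ψ m t| = t ^ ((n:ℝ) - 1) * |w t| := by
    intro t ht
    simp only [hψdef]
    rw [abs_mul, abs_of_nonneg (Real.rpow_nonneg ht.le _)]
    have he : 2 * ((m:ℕ):ℝ) + (n:ℝ) - (k:ℝ) - 1 = (n:ℝ) - 1 := by rw [hkR]; ring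
    rw [he]
  -- the nonsingular terms
  have hterm : ∀ j : ℕ, 1 ≤ j → j ≤ m →
      IntegrableOn (fun s => s ^ (2*j-1) * ∫ t in Set.Ioi s, ψ (m-j) t) (Set.Ioi 0) ∧
      ∫ s in Set.Ioi 0, s ^ (2*j-1) * ∫ t in Set.Ioi s, ψ (m-j) t = 0 := by
    intro j hj1 hjm
    have ha : 2*j-1+1 = 2*j := by omega
    have hint : IntegrableOn (fun t => t ^ (2*j-1+1) * |ψ (m-j) t|) (Set.Ioi 0) := by
      rw [ha]
      exact IntegrableOn.congr_fun hn1 (fun t ht => (hexpabs j hjm t ht).symm) measurableSet_Ioi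
    obtain ⟨h1, h2⟩ := fub_pow (ψ (m-j)) (hψmeas _) (2*j-1) hint
    refine ⟨h1, ?_⟩
    rw [h2]
    have : ∫ t in Set.Ioi 0, t ^ (2*j-1+1) * ψ (m-j) t = 0 := by
      rw [ha, setIntegral_congr_fun measurableSet_Ioi
        (fun t ht => hexp j hjm t ht), hψzero m (by omega)]
    rw [this, mul_zero]
  -- the singular term
  have hsing : IntegrableOn (fun s => s⁻¹ * ∫ t in Set.Ioi s, ψ m t) (Set.Ioi 0) ∧
      ∫ s in Set.Ioi 0, s⁻¹ * ∫ t in Set.Ioi s, ψ m t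
        = ∫ t in Set.Ioi 0, Real.log t * ψ m t := by
    refine fub_log (ψ m) (hψmeas m) (hψint m (by omega)) ?_ (hψzero m (by omega))
    refine IntegrableOn.congr_fun hlog (fun t ht => ?_) measurableSet_Ioi
    rw [hψmabs t ht]
  -- coefficients
  set C : ℕ → ℝ := fun j => (-1:ℝ)^(j+m) * (m.choose j) * (-2 / (Nat.factorial m : ℝ))
    with hCdef
  -- decomposition of lam
  have hdecomp : ∀ s ∈ Set.Ioi (0:ℝ), lam s = ∑ j ∈ Finset.range (m+1),
      C j * ((if j = 0 then s⁻¹ else s ^ (2*j-1)) * ∫ t in Set.Ioi s, ψ (m-j) t) := by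
    intro s hs
    rw [Set.mem_Ioi] at hs
    have hGamma : Real.Gamma ((k : ℝ) / 2 + 1) = (Nat.factorial m : ℝ) := by
      have h1 : (k:ℝ)/2 = (m:ℕ) := by rw [hkR]; ring
      rw [h1, Real.Gamma_nat_eq_factorial]
    have himg : (fun t : ℝ => t^2) '' Set.Ioo 0 s = Set.Ioo 0 (s^2) := by
      ext r
      simp only [Set.mem_image, Set.mem_Ioo]
      constructor
      · rintro ⟨t, ⟨ht0, hts⟩, rfl⟩
        exact ⟨by positivity, by nlinarith⟩
      · rintro ⟨hr0, hrs⟩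
        refine ⟨Real.sqrt r, ⟨Real.sqrt_pos.2 hr0, ?_⟩, Real.sq_sqrt hr0.le⟩
        calc Real.sqrt r < Real.sqrt (s^2) := Real.sqrt_lt_sqrt hr0.le hrs
          _ = s := Real.sqrt_sq hs.le
    have hder : ∀ t ∈ Set.Ioo (0:ℝ) s,
        HasDerivWithinAt (fun t : ℝ => t^2) (2*t) (Set.Ioo 0 s) t := by
      intro t _
      have := (hasDerivAt_pow 2 t).hasDerivWithinAt (s := Set.Ioo (0:ℝ) s)
      simpa using this
    have hinj : Set.InjOn (fun t : ℝ => t^2) (Set.Ioo 0 s) := by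
      intro a ha b hb h
      simp only at h
      rw [← Real.sqrt_sq ha.1.le, h, Real.sqrt_sq hb.1.le]
    have hsub : ∫ r in Set.Ioo 0 (s^2), (s^2 - r) ^ ((k:ℝ)/2) * wt r
        = ∫ t in Set.Ioo 0 s, |2*t| • ((s^2 - t^2) ^ ((k:ℝ)/2) * wt (t^2)) := by
      rw [← himg, integral_image_eq_integral_abs_deriv_smul measurableSet_Ioo hder hinj]
    have hpt : ∀ t ∈ Set.Ioo (0:ℝ) s,
        |2*t| • ((s^2 - t^2) ^ ((k:ℝ)/2) * wt (t^2))
        = ∑ j ∈ Finset.range (m+1),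
            ((-1:ℝ)^(j+m) * (m.choose j) * 2 * (s^2)^j) * ψ (m-j) t := by
      intro t ht
      obtain ⟨ht0, hts⟩ := ht
      rw [smul_eq_mul, hwt (t^2), Real.sqrt_sq ht0.le, abs_of_pos (by positivity : (0:ℝ) < 2*t)]
      have e0 : (k:ℝ)/2 = ((m:ℕ) : ℝ) := by rw [hkR]; ring
      have e1 : ((s^2 - t^2 : ℝ)) ^ ((k:ℝ)/2) = (s^2 - t^2)^m := by
        rw [e0, Real.rpow_natCast]
      have e2 : ((t^2:ℝ)) ^ (((n:ℝ)-k)/2 - 1) = t ^ ((n:ℝ) - k - 2) := by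
        rw [← Real.rpow_natCast t 2, ← Real.rpow_mul ht0.le]
        congr 1
        push_cast
        ring
      rw [e1, e2, sub_pow, Finset.sum_mul, Finset.mul_sum]
      refine Finset.sum_congr rfl fun j hj => ?_
      rw [Finset.mem_range] at hj
      have hjm : j ≤ m := by omega
      have ht1 : (t^2 : ℝ)^(m-j) * (t * t ^ ((n:ℝ)-k-2))
          = t ^ (2 * ((m-j : ℕ):ℝ) + (n:ℝ) - (k:ℝ) - 1) := by
        rw [← pow_mul, ← Real.rpow_natCast t (2*(m-j))]
        nth_rewrite 2 [← Real.rpow_one t]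
        rw [← Real.rpow_add ht0, ← Real.rpow_add ht0]
        congr 1
        push_cast
        ring
      simp only [hψdef]
      rw [← ht1]
      ring
    have hintg : ∀ j ∈ Finset.range (m+1),
        IntegrableOn (fun t => ((-1:ℝ)^(j+m) * (m.choose j) * 2 * (s^2)^j) * ψ (m-j) t)
          (Set.Ioo 0 s) := by
      intro j hj
      rw [Finset.mem_range] at hj
      exact (((hψint (m-j) (by omega)).mono_set
        (fun x hx => hx.1)).const_mul _)
    have hsplit : ∀ j : ℕ, j ≤ m → ∫ t in Set.Ioo 0 s, ψ (m-j) t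
        = - ∫ t in Set.Ioi s, ψ (m-j) t := by
      intro j hj
      have h1 := integral_split (ψ (m-j)) (hψint (m-j) (by omega)) hs
      rw [hψzero (m-j) (by omega)] at h1
      linarith
    rw [hlam s hs, hGamma, hsub, setIntegral_congr_fun measurableSet_Ioo hpt,
      integral_finset_sum _ hintg, Finset.mul_sum]
    refine Finset.sum_congr rfl fun j hj => ?_
    rw [Finset.mem_range] at hj
    have hjm : j ≤ m := by omega
    rw [integral_const_mul, hsplit j hjm, hCdef]
    generalize (∫ t in Set.Ioi s, ψ (m - j) t) = G
    by_cases hj0 : j = 0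
    · subst hj0
      rw [if_pos rfl, pow_zero, one_div, mul_inv]
      ring
    · rw [if_neg hj0]
      have h2j : 2*j = (2*j-1)+1 := by omega
      rw [← pow_mul, h2j, pow_succ]
      field_simp
      ring_nf
      rw [show 1 + (j * 2 - 1) - 1 = j * 2 - 1 by omega]
  -- summand integrability
  have hsummand : ∀ j ∈ Finset.range (m+1), IntegrableOn
      (fun s => C j * ((if j = 0 then s⁻¹ else s ^ (2*j-1)) * ∫ t in Set.Ioi s, ψ (m-j) t))
      (Set.Ioi 0) := by
    intro j hj
    rw [Finset.mem_range] at hj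
    by_cases hj0 : j = 0
    · subst hj0
      simp only [if_pos rfl, Nat.sub_zero]
      exact hsing.1.const_mul _
    · simp only [if_neg hj0]
      exact ((hterm j (by omega) (by omega)).1).const_mul _
  constructor
  · exact IntegrableOn.congr_fun (integrable_finset_sum _ hsummand)
      (fun s hs => (hdecomp s hs).symm) measurableSet_Ioi
  · rw [setIntegral_congr_fun measurableSet_Ioi hdecomp,
      integral_finset_sum _ hsummand]
    have hval : ∀ j ∈ Finset.range (m+1), j ≠ 0 →
        ∫ s in Set.Ioi 0, C j * ((if j = 0 then s⁻¹ else s ^ (2*j-1)) *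
          ∫ t in Set.Ioi s, ψ (m-j) t) = 0 := by
      intro j hj hj0
      rw [Finset.mem_range] at hj
      simp only [if_neg hj0]
      rw [integral_const_mul, (hterm j (by omega) (by omega)).2, mul_zero]
    rw [Finset.sum_eq_single 0 (fun j hj hj0 => hval j hj hj0)
      (fun h => absurd (Finset.mem_range.2 (by omega)) h)]
    have hfin : ∫ t in Set.Ioi 0, Real.log t * ψ m t
        = ∫ t in Set.Ioi 0, t ^ ((n:ℝ) - 1) * w t * Real.log t := by
      refine setIntegral_congr_fun measurableSet_Ioi (fun t ht => ?_)
      rw [Set.mem_Ioi] at ht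
      simp only [hψdef]
      have he : 2 * ((m:ℕ):ℝ) + (n:ℝ) - (k:ℝ) - 1 = (n:ℝ) - 1 := by rw [hkR]; ring
      rw [he]
      ring
    have hif : (fun a : ℝ => C 0 * ((if (0:ℕ) = 0 then a⁻¹ else a ^ (2*0-1)) *
        ∫ t in Set.Ioi a, ψ (m-0) t)) = fun a : ℝ => C 0 * (a⁻¹ * ∫ t in Set.Ioi a, ψ m t) := by
      funext a; rw [if_pos rfl, Nat.sub_zero]
    rw [hif, integral_const_mul, hsing.2, hfin, hkd2, hCdef]
    simp only [Nat.choose_zero_right, Nat.cast_one, pow_add, pow_one, zero_add]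
    ring
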